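/- Let {v_k}_{k=1}^n be an orthonormal basis of ℂⁿ, 1 ≤ r, s with r + s ≤ n, λ > 0, and real numbers λ_h with |λ_h| < λ for r < h ≤ n−s. Suppose a_i > 0 (1 ≤ i ≤ r) and x_j ≥ 0 (n−s < j ≤ n) satisfy Σ a_i (v_i ∘ v̄_i) = Σ x_j (v_j ∘ v̄_j). Then M = λ Σ_{i=1}^r v_i⊗v_i + Σ_{h=r+1}^{n−s} λ_h v_h⊗v_h − λ Σ_{j=n−s+1}^n v_j⊗v_j is Hermitian and minimal: ‖M‖ ≤ ‖M + D‖ for every real diagonal D. -/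

import Mathlib

open scoped ComplexOrder
open Matrix

noncomputable def opNorm {n : Type*} [Fintype n] [DecidableEq n] (M : Matrix n n ℂ) : ℝ :=
  ‖(Matrix.toEuclideanCLM (𝕜 := ℂ) M : EuclideanSpace ℂ n →L[ℂ] EuclideanSpace ℂ n)‖

/-- `M` is minimal: its operator norm is ≤ that of `M + D` for every real diagonal `D`. -/
def IsMinimal {n : Type*} [Fintype n] [DecidableEq n] (M : Matrix n n ℂ) : Prop :=
  ∀ d : n → ℝ, opNorm M ≤ opNorm (M + Matrix.diagonal fun i => (d i : ℂ))

/-- The family `v` is orthonormal for the standard inner product of `ℂⁿ`. -/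
def ONFamily {ι : Type*} [DecidableEq ι] {n : Type*} [Fintype n]
    (v : ι → (n → ℂ)) : Prop :=
  ∀ i j, dotProduct (star (v i)) (v j) = if i = j then (1 : ℂ) else 0

section Aux

lemma aux_vecMulVec_mulVec {n : Type*} [Fintype n] (a b x : n → ℂ) :
    Matrix.vecMulVec a b *ᵥ x = (dotProduct b x) • a := by
  ext i
  simp [Matrix.mulVec, Matrix.vecMulVec_apply, dotProduct, Finset.mul_sum, mul_comm,
    mul_left_comm]

lemma aux_sum_mulVec {ι n : Type*} [Fintype ι] [Fintype n] (A : ι → Matrix n n ℂ) (x : n → ℂ) :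
    (∑ i, A i) *ᵥ x = ∑ i, A i *ᵥ x := by
  ext k
  simp [Matrix.mulVec, dotProduct, Matrix.sum_apply, Finset.sum_mul]
  rw [Finset.sum_comm]

end Aux

set_option maxHeartbeats 1000000 in
theorem stmt14 (n r s : ℕ) (hr : 1 ≤ r) (hs : 1 ≤ s) (hrs : r + s ≤ n)
    (v : Fin n → (Fin n → ℂ)) (hv : ONFamily v)
    (lam : ℝ) (hlam : 0 < lam)
    (mu : Fin n → ℝ)
    (hmu₁ : ∀ i : Fin n, (i : ℕ) < r → mu i = lam)
    (hmu₂ : ∀ i : Fin n, r ≤ (i : ℕ) → (i : ℕ) < n - s → |mu i| < lam)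
    (hmu₃ : ∀ i : Fin n, n - s ≤ (i : ℕ) → mu i = -lam)
    (a : Fin n → ℝ)
    (hapos : ∀ i : Fin n, (i : ℕ) < r → 0 < a i)
    (hxnn : ∀ j : Fin n, n - s ≤ (j : ℕ) → 0 ≤ a j)
    (heq : ∀ k, ∑ i ∈ Finset.univ.filter (fun i : Fin n => (i : ℕ) < r), a i * ‖v i k‖ ^ 2 =
      ∑ j ∈ Finset.univ.filter (fun j : Fin n => n - s ≤ (j : ℕ)), a j * ‖v j k‖ ^ 2) :
    (∑ i, ((mu i : ℝ) : ℂ) • Matrix.vecMulVec (v i) (star (v i))).IsHermitian ∧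
      IsMinimal (∑ i, ((mu i : ℝ) : ℂ) • Matrix.vecMulVec (v i) (star (v i))) := by
  classical
  set M : Matrix (Fin n) (Fin n) ℂ :=
    ∑ i, ((mu i : ℝ) : ℂ) • Matrix.vecMulVec (v i) (star (v i)) with hM
  -- Hermitian
  have herm : M.IsHermitian := by
    unfold Matrix.IsHermitian
    rw [hM, Matrix.conjTranspose_sum]
    refine Finset.sum_congr rfl fun i _ => ?_
    rw [Matrix.conjTranspose_smul]
    ext k l
    simp [Matrix.conjTranspose_apply, Matrix.vecMulVec_apply, mul_comm]
  refine ⟨herm, ?_⟩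
  -- setup
  have hn : 0 < n := lt_of_lt_of_le (by omega) hrs
  set w : Fin n → EuclideanSpace ℂ (Fin n) :=
    fun i => (WithLp.equiv 2 (Fin n → ℂ)).symm (v i) with hwdef
  have hw : Orthonormal ℂ w := by
    rw [orthonormal_iff_ite]
    intro i j
    rw [hwdef]
    rw [EuclideanSpace.inner_eq_star_dotProduct, dotProduct_comm]
    exact hv i j
  have hmub : ∀ j : Fin n, |mu j| ≤ lam := by
    intro j
    rcases lt_or_ge (j : ℕ) r with h | h
    · rw [hmu₁ j h, abs_of_pos hlam]
    rcases lt_or_ge (j : ℕ) (n - s) with h2 | h2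
    · exact (hmu₂ j h h2).le
    · rw [hmu₃ j h2, abs_neg, abs_of_pos hlam]
  have hMv : ∀ i, M *ᵥ v i = ((mu i : ℝ) : ℂ) • v i := by
    intro i
    rw [hM, aux_sum_mulVec]
    have : ∀ j, (((mu j : ℝ) : ℂ) • Matrix.vecMulVec (v j) (star (v j))) *ᵥ v i =
        ((mu j : ℝ) : ℂ) • ((if j = i then (1:ℂ) else 0) • v j) := by
      intro j
      rw [Matrix.smul_mulVec, aux_vecMulVec_mulVec, hv j i]
    simp only [this]
    rw [Finset.sum_eq_single i]
    · simp
    · intro b _ hb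
      simp [hb]
    · simp
  set T := (Matrix.toEuclideanCLM (𝕜 := ℂ) M :
      EuclideanSpace ℂ (Fin n) →L[ℂ] EuclideanSpace ℂ (Fin n)) with hT
  -- upper bound : ‖T‖ ≤ lam
  have hTx : ∀ x : EuclideanSpace ℂ (Fin n),
      T x = ∑ j, (((mu j : ℝ) : ℂ) * inner ℂ (w j) x) • w j := by
    intro x
    have h0 : T x = (WithLp.equiv 2 (Fin n → ℂ)).symm
        (M *ᵥ (WithLp.equiv 2 (Fin n → ℂ) x)) := rfl
    rw [h0, hM, aux_sum_mulVec]
    have : ∀ j, (((mu j : ℝ) : ℂ) • Matrix.vecMulVec (v j) (star (v j))) *ᵥ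
        (WithLp.equiv 2 (Fin n → ℂ) x) =
        (((mu j : ℝ) : ℂ) * inner ℂ (w j) x) • v j := by
      intro j
      rw [Matrix.smul_mulVec, aux_vecMulVec_mulVec, smul_smul]
      congr 1
      rw [hwdef, EuclideanSpace.inner_eq_star_dotProduct, dotProduct_comm _ (star _)]
      rfl
    simp only [this]
    rw [WithLp.equiv_symm_apply, WithLp.toLp_sum]
    simp only [WithLp.toLp_smul, hwdef, WithLp.equiv_symm_apply]
  have hTbound : ‖T‖ ≤ lam := by
    refine ContinuousLinearMap.opNorm_le_bound _ hlam.le fun x => ?_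
    have key : ‖T x‖ ^ 2 ≤ (lam * ‖x‖) ^ 2 := by
      have e1 : (‖T x‖ : ℝ) ^ 2 =
          ∑ j, ‖((mu j : ℝ) : ℂ) * inner ℂ (w j) x‖ ^ 2 := by
        rw [← inner_self_eq_norm_sq (𝕜 := ℂ), hTx]
        rw [hw.inner_sum (fun j => ((mu j : ℝ) : ℂ) * inner ℂ (w j) x)
          (fun j => ((mu j : ℝ) : ℂ) * inner ℂ (w j) x) Finset.univ]
        rw [map_sum]
        refine Finset.sum_congr rfl fun j _ => ?_
        rw [RCLike.conj_mul]
        norm_cast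
      rw [e1]
      have e2 : ∀ j : Fin n, ‖((mu j : ℝ) : ℂ) * inner ℂ (w j) x‖ ^ 2 ≤
          lam ^ 2 * ‖(inner ℂ (w j) x : ℂ)‖ ^ 2 := by
        intro j
        rw [norm_mul]
        have hb : ‖((mu j : ℝ) : ℂ)‖ ≤ lam := by
          rw [Complex.norm_real, Real.norm_eq_abs]; exact hmub j
        have hb2 : ‖((mu j : ℝ) : ℂ)‖ ^ 2 ≤ lam ^ 2 := by
          nlinarith [norm_nonneg ((mu j : ℝ) : ℂ)]
        calc (‖((mu j : ℝ) : ℂ)‖ * ‖(inner ℂ (w j) x : ℂ)‖) ^ 2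
            = ‖((mu j : ℝ) : ℂ)‖ ^ 2 * ‖(inner ℂ (w j) x : ℂ)‖ ^ 2 := by ring
          _ ≤ lam ^ 2 * ‖(inner ℂ (w j) x : ℂ)‖ ^ 2 :=
            mul_le_mul_of_nonneg_right hb2 (sq_nonneg _)
      calc ∑ j, ‖((mu j : ℝ) : ℂ) * inner ℂ (w j) x‖ ^ 2
          ≤ ∑ j, lam ^ 2 * ‖(inner ℂ (w j) x : ℂ)‖ ^ 2 := Finset.sum_le_sum fun j _ => e2 j
        _ = lam ^ 2 * ∑ j, ‖(inner ℂ (w j) x : ℂ)‖ ^ 2 := by rw [Finset.mul_sum]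
        _ ≤ lam ^ 2 * ‖x‖ ^ 2 := by
            gcongr
            exact hw.sum_inner_products_le x
        _ = (lam * ‖x‖) ^ 2 := by ring
    have h1 : (0:ℝ) ≤ ‖T x‖ := norm_nonneg _
    have h2 : (0:ℝ) ≤ lam * ‖x‖ := by positivity
    nlinarith
  -- lower bound
  intro d
  set D : Matrix (Fin n) (Fin n) ℂ := Matrix.diagonal fun i => ((d i : ℝ) : ℂ) with hD
  set T' := (Matrix.toEuclideanCLM (𝕜 := ℂ) (M + D) :
      EuclideanSpace ℂ (Fin n) →L[ℂ] EuclideanSpace ℂ (Fin n)) with hT'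
  set N : ℝ := ‖T'‖ with hN
  set F : Fin n → ℝ := fun i => mu i + ∑ k, d k * ‖v i k‖ ^ 2 with hF
  have hwnorm : ∀ i, ‖w i‖ = 1 := hw.1
  have hinner : ∀ i, (inner ℂ (w i) (T' (w i)) : ℂ) = ((F i : ℝ) : ℂ) := by
    intro i
    have h0 : T' (w i) = (WithLp.equiv 2 (Fin n → ℂ)).symm ((M + D) *ᵥ v i) := rfl
    rw [h0, hwdef]
    rw [EuclideanSpace.inner_eq_star_dotProduct, dotProduct_comm]
    simp only [WithLp.equiv_symm_apply, WithLp.ofLp_toLp]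
    rw [Matrix.add_mulVec, dotProduct_add, hMv i]
    have hd1 : dotProduct (star (v i)) (((mu i : ℝ) : ℂ) • v i) = ((mu i : ℝ) : ℂ) := by
      rw [dotProduct_smul, hv i i]
      simp
    have hd2 : dotProduct (star (v i)) (D *ᵥ v i) =
        ((∑ k, d k * ‖v i k‖ ^ 2 : ℝ) : ℂ) := by
      rw [hD]
      rw [dotProduct]
      push_cast
      refine Finset.sum_congr rfl fun k _ => ?_
      rw [Pi.star_apply, Matrix.mulVec_diagonal]
      have h2 : (starRingEnd ℂ) (v i k) * v i k = ((‖v i k‖ : ℝ) : ℂ) ^ 2 := RCLike.conj_mul _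
      have h3 : star (v i k) = (starRingEnd ℂ) (v i k) := rfl
      push_cast [← h2, h3]
      ring
    rw [hd1, hd2, hF]
    push_cast
    ring
  have hFb : ∀ i, |F i| ≤ N := by
    intro i
    have h1 : ‖(inner ℂ (w i) (T' (w i)) : ℂ)‖ ≤ ‖w i‖ * ‖T' (w i)‖ := norm_inner_le_norm _ _
    have h2 : ‖T' (w i)‖ ≤ N * ‖w i‖ := T'.le_opNorm _
    rw [hwnorm i] at h1 h2
    rw [hinner i] at h1
    rw [Complex.norm_real, Real.norm_eq_abs] at h1
    calc |F i| ≤ 1 * ‖T' (w i)‖ := h1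
      _ ≤ 1 * (N * 1) := by
          have := h2; nlinarith [norm_nonneg (T' (w i))]
      _ = N := by ring
  -- weighted sums
  set R : Finset (Fin n) := Finset.univ.filter (fun i : Fin n => (i : ℕ) < r) with hR
  set S : Finset (Fin n) := Finset.univ.filter (fun j : Fin n => n - s ≤ (j : ℕ)) with hS
  set A : ℝ := ∑ i ∈ R, a i with hA
  set B : ℝ := ∑ j ∈ S, a j with hB
  set P : Fin n → ℝ := fun k => ∑ i ∈ R, a i * ‖v i k‖ ^ 2 with hP
  set C : ℝ := ∑ k, d k * P k with hC
  have hnorm1 : ∀ i : Fin n, ∑ k, ‖v i k‖ ^ 2 = 1 := by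
    intro i
    have h := hv i i
    rw [if_pos rfl] at h
    have := congrArg Complex.re h
    rw [dotProduct] at this
    simp only [Complex.one_re] at this
    rw [← this, Complex.re_sum]
    refine Finset.sum_congr rfl fun k _ => ?_
    have h2 : star (v i k) * v i k = ((‖v i k‖ : ℝ) : ℂ) ^ 2 := RCLike.conj_mul _
    rw [Pi.star_apply, h2]
    norm_cast
  have memR : ∀ i : Fin n, i ∈ R ↔ (i : ℕ) < r := by
    intro i; rw [hR, Finset.mem_filter]; simp
  have memS : ∀ i : Fin n, i ∈ S ↔ n - s ≤ (i : ℕ) := by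
    intro i; rw [hS, Finset.mem_filter]; simp
  have h1 : ∑ i ∈ R, a i * F i = lam * A + C := by
    rw [hF]
    have : ∀ i ∈ R, a i * (mu i + ∑ k, d k * ‖v i k‖ ^ 2) =
        lam * a i + ∑ k, d k * (a i * ‖v i k‖ ^ 2) := by
      intro i hi
      rw [hmu₁ i ((memR i).mp hi), mul_add, Finset.mul_sum]
      congr 1
      · ring
      · exact Finset.sum_congr rfl fun k _ => by ring
    rw [Finset.sum_congr rfl this, Finset.sum_add_distrib, ← Finset.mul_sum, ← hA]
    congr 1
    rw [Finset.sum_comm, hC]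
    refine Finset.sum_congr rfl fun k _ => ?_
    simp only [hP]
    rw [Finset.mul_sum]
  have h2 : ∑ j ∈ S, a j * F j = -(lam * B) + C := by
    rw [hF]
    have : ∀ j ∈ S, a j * (mu j + ∑ k, d k * ‖v j k‖ ^ 2) =
        -(lam * a j) + ∑ k, d k * (a j * ‖v j k‖ ^ 2) := by
      intro j hj
      rw [hmu₃ j ((memS j).mp hj), mul_add, Finset.mul_sum]
      congr 1
      · ring
      · exact Finset.sum_congr rfl fun k _ => by ring
    rw [Finset.sum_congr rfl this, Finset.sum_add_distrib]
    congr 1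
    · rw [hB, Finset.mul_sum, ← Finset.sum_neg_distrib]
    rw [Finset.sum_comm, hC]
    refine Finset.sum_congr rfl fun k _ => ?_
    simp only [hP]
    rw [heq k, Finset.mul_sum]
  have hAB : A = B := by
    have eA : A = ∑ k, P k := by
      rw [hA, hP, Finset.sum_comm]
      refine Finset.sum_congr rfl fun i _ => ?_
      rw [← Finset.mul_sum, hnorm1 i, mul_one]
    have eB : B = ∑ k, ∑ j ∈ S, a j * ‖v j k‖ ^ 2 := by
      rw [hB, Finset.sum_comm]
      refine Finset.sum_congr rfl fun j _ => ?_
      rw [← Finset.mul_sum, hnorm1 j, mul_one]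
    rw [eA, eB]
    refine Finset.sum_congr rfl fun k _ => ?_
    simp only [hP]
    exact heq k
  have hApos : 0 < A := by
    rw [hA]
    refine Finset.sum_pos (fun i hi => hapos i ((memR i).mp hi)) ?_
    refine ⟨⟨0, hn⟩, ?_⟩
    rw [memR]
    exact hr
  have hup : lam * A + C ≤ A * N := by
    rw [← h1]
    calc ∑ i ∈ R, a i * F i ≤ ∑ i ∈ R, a i * N := by
          refine Finset.sum_le_sum fun i hi => ?_
          have := (hapos i ((memR i).mp hi)).le
          have hFi : F i ≤ N := le_trans (le_abs_self _) (hFb i)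
          nlinarith
      _ = A * N := by rw [hA, Finset.sum_mul]
  have hdown : lam * B - C ≤ B * N := by
    have : -(B * N) ≤ ∑ j ∈ S, a j * F j := by
      calc -(B * N) = ∑ j ∈ S, a j * (-N) := by
            rw [hB, Finset.sum_mul, ← Finset.sum_neg_distrib]
            exact Finset.sum_congr rfl fun j _ => by ring
        _ ≤ ∑ j ∈ S, a j * F j := by
            refine Finset.sum_le_sum fun j hj => ?_
            have haj := hxnn j ((memS j).mp hj)
            have hFj : -N ≤ F j := neg_le_of_abs_le (hFb j)
            nlinarith
    rw [h2] at this
    linarith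
  have hlamN : lam ≤ N := by nlinarith
  show opNorm M ≤ opNorm (M + Matrix.diagonal fun i => ((d i : ℝ) : ℂ))
  calc opNorm M = ‖T‖ := rfl
    _ ≤ lam := hTbound
    _ ≤ N := hlamN
    _ = opNorm (M + D) := rfl
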